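/- arXiv:2603.14962 — 3 statements merged into one kernel-verified Lean document; each statement's English description precedes it below -/
import Mathlib

section
/- Let G and H be graphs with vertex sets V₁, V₂. The distance in the corona graph G⊙H between vertices (x,i) and (y,j) (with i,j ∈ {o} ∪ V₂, where o denotes the copy of a vertex of G) equals d_{H̃}(i,j) if x = y, and d_{H̃}(i,o) + d_G(x,y) + d_{H̃}(o,j) if x ≠ y, where H̃ = K₁ + H is the join of a single vertex with H. -/
open Matrix BigOperators

/-- The join `K₁ + H` of a single vertex (labelled `none`) with `H`. -/
def joinOne {V₂ : Type*} (H : SimpleGraph V₂) : SimpleGraph (Option V₂) where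
  Adj i j := (∃ a b, i = some a ∧ j = some b ∧ H.Adj a b) ∨
    (i = none ∧ j ≠ none) ∨ (i ≠ none ∧ j = none)
  symm := by
    constructor
    rintro i j (⟨a, b, ha, hb, hab⟩ | ⟨h1, h2⟩ | ⟨h1, h2⟩)
    · exact Or.inl ⟨b, a, hb, ha, hab.symm⟩
    · exact Or.inr (Or.inr ⟨h2, h1⟩)
    · exact Or.inr (Or.inl ⟨h2, h1⟩)
  loopless := by
    constructor
    rintro i (⟨a, b, ha, hb, hab⟩ | ⟨h1, h2⟩ | ⟨h1, h2⟩)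
    · rw [ha] at hb; injection hb with h; subst h; exact H.irrefl hab
    · exact h2 h1
    · exact h1 h2

/-- The corona graph `G ⊙ H`, on vertex set `V₁ × ({o} ∪ V₂)` with `o = none`. -/
def corona {V₁ V₂ : Type*} (G : SimpleGraph V₁) (H : SimpleGraph V₂) :
    SimpleGraph (V₁ × Option V₂) where
  Adj p q := (p.2 = none ∧ q.2 = none ∧ G.Adj p.1 q.1) ∨
    (p.1 = q.1 ∧ (joinOne H).Adj p.2 q.2)
  symm := by
    constructor
    rintro p q (⟨h1, h2, h3⟩ | ⟨h1, h2⟩)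
    · exact Or.inl ⟨h2, h1, h3.symm⟩
    · exact Or.inr ⟨h1.symm, (joinOne H).adj_symm h2⟩
  loopless := by
    constructor
    rintro p (⟨_, _, h⟩ | ⟨_, h⟩)
    · exact G.irrefl h
    · exact (joinOne H).irrefl h

section Aux

open SimpleGraph

variable {V₁ V₂ : Type*} (G : SimpleGraph V₁) (H : SimpleGraph V₂)

lemma joinOne_adj_none (a : V₂) : (joinOne H).Adj none (some a) :=
  Or.inr (Or.inl ⟨rfl, by simp⟩)

lemma joinOne_connected : (joinOne H).Connected := by
  rw [connected_iff]
  refine ⟨fun i j => ?_, ⟨none⟩⟩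
  have h : ∀ k : Option V₂, (joinOne H).Reachable none k := by
    rintro (_ | a)
    · exact Reachable.refl _
    · exact (joinOne_adj_none H a).reachable
  exact (h i).symm.trans (h j)

@[reducible] def coronaHomLeft (x : V₁) : joinOne H →g corona G H where
  toFun p := (x, p)
  map_rel' h := Or.inr ⟨rfl, h⟩

@[reducible] def coronaHomG : G →g corona G H where
  toFun v := (v, none)
  map_rel' h := Or.inl ⟨rfl, rfl, h⟩

variable [DecidableEq V₁]

/-- The claimed distance function. -/
noncomputable def gfun (y : V₁) (j : Option V₂) (x : V₁) (i : Option V₂) : ℕ :=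
  if x = y then (joinOne H).dist i j
  else (joinOne H).dist i none + G.dist x y + (joinOne H).dist none j

lemma gfun_lipschitz (hG : G.Connected) (y : V₁) (j : Option V₂)
    {p q : V₁ × Option V₂} (h : (corona G H).Adj p q) :
    gfun G H y j p.1 p.2 ≤ gfun G H y j q.1 q.2 + 1 := by
  have hJ := joinOne_connected H
  obtain ⟨h1, h2, h3⟩ | ⟨h1, h2⟩ := h
  · -- both none, G-adjacency
    rw [gfun, gfun, h1, h2]
    by_cases hx : p.1 = y
    · by_cases hy : q.1 = y
      · exfalso; rw [hx, hy] at h3; exact G.irrefl h3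
      · rw [if_pos hx, if_neg hy]
        have h0 : (joinOne H).dist none none = 0 := SimpleGraph.dist_self
        omega
    · rw [if_neg hx]
      by_cases hy : q.1 = y
      · rw [if_pos hy]
        have h4 : G.dist p.1 y ≤ 1 := by
          have h3' : G.Adj p.1 y := hy ▸ h3
          simpa using SimpleGraph.dist_le (Walk.cons h3' Walk.nil)
        have h0 : (joinOne H).dist none none = 0 := SimpleGraph.dist_self
        omega
      · rw [if_neg hy]
        have ht := hG.dist_triangle (u := p.1) (v := q.1) (w := y)
        have h4 : G.dist p.1 q.1 ≤ 1 := by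
          simpa using SimpleGraph.dist_le (Walk.cons h3 Walk.nil)
        omega
  · -- same base vertex, joinOne-adjacency
    rw [gfun, gfun, h1]
    have h4 : (joinOne H).dist p.2 q.2 ≤ 1 := by
      simpa using SimpleGraph.dist_le (Walk.cons h2 Walk.nil)
    by_cases hx : q.1 = y
    · rw [if_pos hx, if_pos hx]
      have ht := hJ.dist_triangle (u := p.2) (v := q.2) (w := j)
      omega
    · rw [if_neg hx, if_neg hx]
      have ht := hJ.dist_triangle (u := p.2) (v := q.2) (w := none)
      omega

lemma gfun_le_walk (hG : G.Connected)
    {p q : V₁ × Option V₂} (w : (corona G H).Walk p q) :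
    gfun G H q.1 q.2 p.1 p.2 ≤ w.length := by
  induction w with
  | nil => simp [gfun, SimpleGraph.dist_self]
  | cons h w ih =>
      simp only [Walk.length_cons]
      exact (gfun_lipschitz G H hG _ _ h).trans (by omega)

end Aux

/-- The distance in the corona graph `G ⊙ H` between `(x,i)` and `(y,j)`
equals `d_{H̃}(i,j)` if `x = y`, and `d_{H̃}(i,o) + d_G(x,y) + d_{H̃}(o,j)` if `x ≠ y`,
where `H̃ = K₁ + H` (with the extra vertex `o = none`). -/
theorem corona_dist {V₁ V₂ : Type*} [Fintype V₁] [Fintype V₂] [DecidableEq V₁]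
    (G : SimpleGraph V₁) (H : SimpleGraph V₂) (hG : G.Connected)
    (x y : V₁) (i j : Option V₂) :
    (corona G H).dist (x, i) (y, j) =
      if x = y then (joinOne H).dist i j
      else (joinOne H).dist i none + G.dist x y + (joinOne H).dist none j := by
  have hJ := joinOne_connected H
  have hW : ∃ w : (corona G H).Walk (x, i) (y, j), w.length = gfun G H y j x i := by
    rw [gfun]
    split_ifs with hxy
    · subst hxy
      obtain ⟨w, hw⟩ := hJ.exists_walk_length_eq_dist i j
      exact ⟨w.map (coronaHomLeft G H x), by simp [hw]⟩
    · obtain ⟨w1, hw1⟩ := hJ.exists_walk_length_eq_dist i none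
      obtain ⟨w2, hw2⟩ := hG.exists_walk_length_eq_dist x y
      obtain ⟨w3, hw3⟩ := hJ.exists_walk_length_eq_dist none j
      exact ⟨(w1.map (coronaHomLeft G H x)).append
        ((w2.map (coronaHomG G H)).append (w3.map (coronaHomLeft G H y))),
        by simp [hw1, hw2, hw3]; omega⟩
  obtain ⟨w, hw⟩ := hW
  have key : (corona G H).dist (x, i) (y, j) = gfun G H y j x i := by
    apply le_antisymm (hw ▸ SimpleGraph.dist_le w)
    obtain ⟨w', hw'⟩ := SimpleGraph.Reachable.exists_walk_length_eq_dist ⟨w⟩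
    calc gfun G H y j x i ≤ w'.length := gfun_le_walk G H hG w'
    _ = _ := hw'
  rw [key, gfun]
end

section
/- The distance matrix of the corona graph G⊙H admits the block decomposition D_{G⊙H} = D_G ⊗ [[J,J],[J,J]] + I_G ⊗ [[0,0],[0, −2I − A_H]] + J_G ⊗ [[0,J],[J,2J]], where the second tensor factor is partitioned according to {o} ∪ V₂. -/
open Matrix BigOperators

/-- The distance matrix of a graph, with real entries. -/
noncomputable def distMatrix {V : Type*} (G : SimpleGraph V) : Matrix V V ℝ :=
  fun x y => (G.dist x y : ℝ)

/-- Middle block of the decomposition, `[[0,0],[0, −2I − A_H]]`, indexed by `{o} ∪ V₂`. -/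
noncomputable def blockB {V₂ : Type*} [DecidableEq V₂] (H : SimpleGraph V₂)
    [DecidableRel H.Adj] : Option V₂ → Option V₂ → ℝ
  | some a, some b => -2 * (if a = b then 1 else 0) - (H.adjMatrix ℝ) a b
  | _, _ => 0

/-- Last block of the decomposition, `[[0,J],[J,2J]]`, indexed by `{o} ∪ V₂`. -/
def blockC {V₂ : Type*} : Option V₂ → Option V₂ → ℝ
  | none, none => 0
  | none, some _ => 1
  | some _, none => 1
  | some _, some _ => 2

section Aux

variable {V₁ V₂ : Type*} [DecidableEq V₁] [DecidableEq V₂]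
variable (G : SimpleGraph V₁) (H : SimpleGraph V₂) [DecidableRel H.Adj]

/-- weight of a second coordinate: distance to the base vertex. -/
def hwt : Option V₂ → ℕ
  | none => 0
  | some _ => 1

/-- distance inside a copy of `K₁ + H`. -/
def dHopt (H : SimpleGraph V₂) [DecidableRel H.Adj] : Option V₂ → Option V₂ → ℕ
  | none, none => 0
  | none, some _ => 1
  | some _, none => 1
  | some a, some b => if a = b then 0 else if H.Adj a b then 1 else 2

noncomputable def fdist (p q : V₁ × Option V₂) : ℕ :=
  if p.1 = q.1 then dHopt H p.2 q.2 else hwt p.2 + G.dist p.1 q.1 + hwt q.2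

lemma hwt_le_one (i : Option V₂) : hwt i ≤ 1 := by cases i <;> simp [hwt]

lemma dHopt_le_two (i j : Option V₂) : dHopt H i j ≤ 2 := by
  cases i <;> cases j <;> simp [dHopt] <;> split_ifs <;> omega

lemma dHopt_none (j : Option V₂) : dHopt H none j = hwt j := by
  cases j <;> rfl

lemma dHopt_pos_of_ne {i j : Option V₂} (h : i ≠ j) : 1 ≤ dHopt H i j := by
  cases i <;> cases j <;> simp_all [dHopt]
  split_ifs <;> omega

lemma dHopt_adj {i j : Option V₂} (h : (joinOne H).Adj i j) : dHopt H i j = 1 := by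
  rcases h with ⟨a, b, ha, hb, hab⟩ | ⟨h1, h2⟩ | ⟨h1, h2⟩
  · subst ha; subst hb
    have : a ≠ b := fun e => H.irrefl (e ▸ hab)
    simp [dHopt, this, hab]
  · subst h1; cases j
    · exact absurd rfl h2
    · rfl
  · subst h2; cases i
    · exact absurd rfl h1
    · rfl

lemma adj_dist_le_one {x z : V₁} (h : G.Adj x z) : G.dist x z ≤ 1 :=
  SimpleGraph.dist_le (SimpleGraph.Walk.cons h SimpleGraph.Walk.nil)

lemma lip (hG : G.Connected) {p q : V₁ × Option V₂} (r : V₁ × Option V₂)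
    (h : (corona G H).Adj p q) : fdist G H p r ≤ 1 + fdist G H q r := by
  obtain ⟨x, i⟩ := p; obtain ⟨z, k⟩ := q; obtain ⟨y, j⟩ := r
  rcases h with ⟨hi, hk, hadj⟩ | ⟨hxz, hjoin⟩
  · simp only at hi hk hadj; subst hi; subst hk
    unfold fdist
    simp only
    by_cases hxy : x = y
    · subst hxy
      rw [if_pos rfl]
      have h1 := dHopt_none H j
      have h2 := hwt_le_one j
      split_ifs <;> omega
    · rw [if_neg hxy]
      by_cases hzy : z = y
      · subst hzy
        rw [if_pos rfl, dHopt_none H j]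
        have := adj_dist_le_one G hadj
        simp [hwt]; omega
      · rw [if_neg hzy]
        have h1 : G.dist x y ≤ G.dist x z + G.dist z y := hG.dist_triangle
        have h2 := adj_dist_le_one G hadj
        simp [hwt]; omega
  · simp only at hxz hjoin; subst hxz
    unfold fdist
    simp only
    by_cases hxy : x = y
    · subst hxy
      rw [if_pos rfl, if_pos rfl]
      by_cases hkj : k = j
      · subst hkj
        have := dHopt_adj H hjoin
        have h2 : dHopt H k k = 0 := by
          cases k <;> simp [dHopt]
        omega
      · have := dHopt_pos_of_ne H hkj
        have := dHopt_le_two H i j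
        omega
    · rw [if_neg hxy, if_neg hxy]
      have := hwt_le_one (V₂ := V₂) i
      omega

lemma walk_ge (hG : G.Connected) {p q : V₁ × Option V₂} (W : (corona G H).Walk p q) :
    fdist G H p q ≤ W.length := by
  induction W with
  | nil =>
    simp only [SimpleGraph.Walk.length_nil, fdist, if_pos rfl]
    rename_i u
    obtain ⟨x, i⟩ := u
    cases i <;> simp [dHopt]
  | cons h W ih =>
    calc fdist G H _ _ ≤ 1 + fdist G H _ _ := lip G H hG _ h
      _ ≤ 1 + W.length := by omega
      _ = _ := by simp [SimpleGraph.Walk.length_cons]; omega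

/-- base homomorphism -/
def homBase : G →g corona G H where
  toFun v := (v, none)
  map_rel' h := Or.inl ⟨rfl, rfl, h⟩

lemma adj_up (x : V₁) (a : V₂) : (corona G H).Adj (x, some a) (x, none) :=
  Or.inr ⟨rfl, Or.inr (Or.inr ⟨by simp, rfl⟩)⟩

lemma adj_down (x : V₁) (a : V₂) : (corona G H).Adj (x, none) (x, some a) :=
  Or.inr ⟨rfl, Or.inr (Or.inl ⟨rfl, by simp⟩)⟩

lemma adj_copy (x : V₁) {a b : V₂} (h : H.Adj a b) :
    (corona G H).Adj (x, some a) (x, some b) :=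
  Or.inr ⟨rfl, Or.inl ⟨a, b, rfl, rfl, h⟩⟩

/-- walk from `(x,i)` down to `(x,none)` -/
def walkDown (x : V₁) : (i : Option V₂) → (corona G H).Walk (x, i) (x, none)
  | none => SimpleGraph.Walk.nil
  | some a => SimpleGraph.Walk.cons (adj_up G H x a) SimpleGraph.Walk.nil

lemma walkDown_length (x : V₁) (i : Option V₂) : (walkDown G H x i).length = hwt i := by
  cases i <;> rfl

lemma exists_walk (hG : G.Connected) (p q : V₁ × Option V₂) :
    ∃ W : (corona G H).Walk p q, W.length = fdist G H p q := by
  obtain ⟨x, i⟩ := p; obtain ⟨y, j⟩ := q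
  by_cases hxy : x = y
  · subst hxy
    cases i with
    | none => cases j with
      | none => exact ⟨SimpleGraph.Walk.nil, by simp [fdist, dHopt]⟩
      | some b => exact ⟨SimpleGraph.Walk.cons (adj_down G H x b) SimpleGraph.Walk.nil,
          by simp [fdist, dHopt]⟩
    | some a => cases j with
      | none => exact ⟨SimpleGraph.Walk.cons (adj_up G H x a) SimpleGraph.Walk.nil,
          by simp [fdist, dHopt]⟩
      | some b =>
        by_cases hab : a = b
        · subst hab; exact ⟨SimpleGraph.Walk.nil, by simp [fdist, dHopt]⟩
        · by_cases hadj : H.Adj a b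
          · exact ⟨SimpleGraph.Walk.cons (adj_copy G H x hadj) SimpleGraph.Walk.nil,
              by simp [fdist, dHopt, hab, hadj]⟩
          · exact ⟨SimpleGraph.Walk.cons (adj_up G H x a)
              (SimpleGraph.Walk.cons (adj_down G H x b) SimpleGraph.Walk.nil),
              by simp [fdist, dHopt, hab, hadj]⟩
  · obtain ⟨P, hP⟩ := hG.exists_walk_length_eq_dist x y
    refine ⟨(walkDown G H x i).append (((P.map (homBase G H)).copy rfl rfl : (corona G H).Walk (x, none) (y, none)).append
      ((walkDown G H y j).reverse)), ?_⟩
    simp [SimpleGraph.Walk.length_append, SimpleGraph.Walk.length_map,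
      SimpleGraph.Walk.length_reverse, walkDown_length, hP, fdist, hxy]
    have hc : ((P.map (homBase G H)).copy rfl rfl : (corona G H).Walk (x, none) (y, none)).length
        = P.length :=
      (SimpleGraph.Walk.length_copy _ _ _).trans (SimpleGraph.Walk.length_map _ _)
    omega

lemma corona_dist_s2 (hG : G.Connected) (p q : V₁ × Option V₂) :
    (corona G H).dist p q = fdist G H p q := by
  obtain ⟨W, hW⟩ := exists_walk G H hG p q
  refine le_antisymm (hW ▸ SimpleGraph.dist_le W) ?_
  obtain ⟨P, hP⟩ := SimpleGraph.Reachable.exists_walk_length_eq_dist ⟨W⟩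
  exact hP ▸ walk_ge G H hG P

end Aux

/-- The distance matrix of the corona graph `G ⊙ H` admits the block
decomposition
`D_{G⊙H} = D_G ⊗ [[J,J],[J,J]] + I_G ⊗ [[0,0],[0,−2I−A_H]] + J_G ⊗ [[0,J],[J,2J]]`,
stated entrywise. -/
theorem corona_distMatrix_decomposition {V₁ V₂ : Type*} [Fintype V₁] [Fintype V₂]
    [DecidableEq V₁] [DecidableEq V₂]
    (G : SimpleGraph V₁) (H : SimpleGraph V₂) [DecidableRel H.Adj] (hG : G.Connected)
    (x y : V₁) (i j : Option V₂) :
    distMatrix (corona G H) (x, i) (y, j) =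
      distMatrix G x y * 1 + (if x = y then blockB H i j else 0) + 1 * blockC i j := by
  rw [distMatrix, corona_dist_s2 G H hG, distMatrix]
  by_cases hxy : x = y
  · subst hxy
    rw [if_pos rfl, SimpleGraph.dist_self]
    simp only [fdist, if_pos rfl, Nat.cast_zero, zero_mul, zero_add]
    cases i with
    | none => cases j <;> simp [dHopt, blockB, blockC]
    | some a => cases j with
      | none => simp [dHopt, blockB, blockC]
      | some b =>
        by_cases hab : a = b
        · subst hab
          simp [dHopt, blockB, blockC, SimpleGraph.irrefl]
        · by_cases hadj : H.Adj a b <;>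
            simp [dHopt, blockB, blockC, hab, hadj] <;> ring
  · rw [if_neg hxy]
    simp only [fdist, if_neg hxy]
    cases i <;> cases j <;> simp [hwt, blockC] <;> push_cast <;> ring
end

section
/- Let H be a κ-regular graph on n vertices and let γ₃ < 0 with γ₃(n+1)+κ+2 ≠ 0. If (γ₃² + γ₃(κ+2))/(γ₃(n+1)+κ+2) < q < 0 and the larger root ψ_H⁻¹(q) of λ² − ((n+1)q−(κ+2))λ − (κ+2)q = 0 is well-defined, then γ₃ < ψ_H⁻¹(q). -/
open Matrix BigOperators

/-- For a `κ`-regular graph `H` on `n` vertices, if `γ₃ < 0`,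
`γ₃(n+1)+κ+2 ≠ 0`, and `(γ₃² + γ₃(κ+2))/(γ₃(n+1)+κ+2) < q < 0` with the larger root
`ψ_H⁻¹(q)` well-defined (nonnegative discriminant), then `γ₃ < ψ_H⁻¹(q)`. -/
theorem gamma3_lt_psi_inv {V₂ : Type*} [Fintype V₂] [DecidableEq V₂]
    (H : SimpleGraph V₂) [DecidableRel H.Adj] (κ : ℕ) (hreg : H.IsRegularOfDegree κ)
    (hn : 1 ≤ Fintype.card V₂) (γ₃ q : ℝ) (hγ : γ₃ < 0)
    (hden : γ₃ * ((Fintype.card V₂ : ℝ) + 1) + (κ : ℝ) + 2 ≠ 0)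
    (h1 : (γ₃ ^ 2 + γ₃ * ((κ : ℝ) + 2)) / (γ₃ * ((Fintype.card V₂ : ℝ) + 1) + (κ : ℝ) + 2) < q)
    (h2 : q < 0)
    (hdisc : 0 ≤ (((Fintype.card V₂ : ℝ) + 1) * q - ((κ : ℝ) + 2)) ^ 2
      + 4 * ((κ : ℝ) + 2) * q) :
    γ₃ < (1 / 2) * (((Fintype.card V₂ : ℝ) + 1) * q - ((κ : ℝ) + 2) +
      Real.sqrt ((((Fintype.card V₂ : ℝ) + 1) * q - ((κ : ℝ) + 2)) ^ 2
        + 4 * ((κ : ℝ) + 2) * q)) := by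
  set N : ℝ := (Fintype.card V₂ : ℝ) with hN
  have hN1 : (1 : ℝ) ≤ N := by rw [hN]; exact_mod_cast hn
  have hc0 : (0 : ℝ) < (κ : ℝ) + 2 := by positivity
  set c : ℝ := (κ : ℝ) + 2 with hc
  set s : ℝ := (N + 1) * q - c with hs
  set D : ℝ := s ^ 2 + 4 * c * q with hD
  have hNp : (0 : ℝ) < N + 1 := by linarith
  rcases lt_or_gt_of_ne hden with hneg | hpos
  · -- denominator negative
    have hx : γ₃ < -c / (N + 1) := by
      rw [lt_div_iff₀ hNp]; linarith
    set x : ℝ := -c / (N + 1) with hxdef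
    have hkey : (2 * x - s) ^ 2 ≤ D := by
      have hx2 : ((2 * x - s) ^ 2 - D) * (N + 1) ^ 2 = -4 * c ^ 2 * N := by
        rw [hxdef, hD, hs]
        field_simp
        ring
      nlinarith [sq_nonneg (N + 1), sq_nonneg c]
    have h3 : 2 * x - s ≤ Real.sqrt D := by
      calc 2 * x - s ≤ |2 * x - s| := le_abs_self _
        _ = Real.sqrt ((2 * x - s) ^ 2) := (Real.sqrt_sq_eq_abs _).symm
        _ ≤ Real.sqrt D := Real.sqrt_le_sqrt hkey
    linarith
  · -- denominator positive
    have h1' : γ₃ ^ 2 + γ₃ * c < q * (γ₃ * (N + 1) + c) := by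
      have hd' : γ₃ * (N + 1) + (κ:ℝ) + 2 = γ₃ * (N + 1) + c := by rw [hc]; ring
      rw [hd', div_lt_iff₀ (by linarith : (0:ℝ) < γ₃ * (N + 1) + c)] at h1
      linarith [h1]
    have hkey : (2 * γ₃ - s) ^ 2 < D := by
      have : (2 * γ₃ - s) ^ 2 - D = 4 * ((γ₃ ^ 2 + γ₃ * c) - q * (γ₃ * (N + 1) + c)) := by
        rw [hD, hs]; ring
      nlinarith
    have h3 : 2 * γ₃ - s < Real.sqrt D := by
      calc 2 * γ₃ - s ≤ |2 * γ₃ - s| := le_abs_self _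
        _ = Real.sqrt ((2 * γ₃ - s) ^ 2) := (Real.sqrt_sq_eq_abs _).symm
        _ < Real.sqrt D := Real.sqrt_lt_sqrt (sq_nonneg _) hkey
    linarith
end
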